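/- Let n ≥ 2 and let w₀, …, wₙ ∈ ℝⁿ satisfy w₀ + ⋯ + wₙ = 0. Define the facet normals z₀, …, zₙ by z_p := −[w₀, w₁, …, wₙ with w_p and w_{p+1} omitted] for 0 ≤ p ≤ n−1, and zₙ := (−1)^(n+1)·[w₁, …, w_{n−1}]. Then z₀ + z₁ + ⋯ + zₙ = 0. -/

import Mathlib

open scoped RealInnerProductSpace BigOperators

/-- The `n × n` matrix whose first column is `w₀` and whose remaining columns are
`w 0, …, w (n - 2)`. -/
noncomputable def colMat {n : ℕ} (w₀ : EuclideanSpace ℝ (Fin n))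
    (w : Fin (n - 1) → EuclideanSpace ℝ (Fin n)) : Matrix (Fin n) (Fin n) ℝ :=
  Matrix.of fun r c =>
    if _h : (c : ℕ) = 0 then w₀ r
    else w ⟨(c : ℕ) - 1, by have := c.isLt; omega⟩ r

/-- The vector product `[w 0, …, w (n-2)]` of `n - 1` vectors in `ℝⁿ`: the unique vector `v`
with `⟪w₀, v⟫ = det (w₀, w 0, …, w (n-2))` for all `w₀`. -/
noncomputable def vprod {n : ℕ} (w : Fin (n - 1) → EuclideanSpace ℝ (Fin n)) :
    EuclideanSpace ℝ (Fin n) :=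
  (WithLp.equiv 2 (Fin n → ℝ)).symm fun i => (colMat (EuclideanSpace.single i 1) w).det

/-- The facet normal `z p` of a loop `w 0, …, w n` of `n + 1` vectors in `ℝⁿ`:
`z p = -[w 0, …, w n  with  w p, w (p+1)  omitted]` for `0 ≤ p ≤ n - 1`, and
`z n = (-1)^(n+1) • [w 1, …, w (n-1)]`. -/
noncomputable def facet {n : ℕ} (w : Fin (n + 1) → EuclideanSpace ℝ (Fin n))
    (p : Fin (n + 1)) : EuclideanSpace ℝ (Fin n) :=
  if _h : (p : ℕ) < n then
    - vprod (fun j : Fin (n - 1) =>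
        if (j : ℕ) < (p : ℕ) then w ⟨(j : ℕ), by have := j.isLt; omega⟩
        else w ⟨(j : ℕ) + 2, by have := j.isLt; omega⟩)
  else
    ((-1 : ℝ) ^ (n + 1)) • vprod (fun j : Fin (n - 1) => w ⟨(j : ℕ) + 1, by have := j.isLt; omega⟩)

open Finset in
/-- argument list for the facet determinant, with junk indexing via `w' : ℕ → V`. -/
private def uaux {V : Type*} (m : ℕ) (w' : ℕ → V) (p : ℕ) : Fin (m + 1) → V :=
  fun j => if (j : ℕ) < p then w' j else w' ((j : ℕ) + 2)

open Finset in
private lemma key {m : ℕ} {V : Type*} [AddCommGroup V] [Module ℝ V]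
    (D : V [⋀^Fin (m + 1)]→ₗ[ℝ] ℝ) (w' : ℕ → V)
    (hw : ∑ k ∈ range (m + 3), w' k = 0) :
    (∑ p ∈ range (m + 2), -(D (uaux m w' p))) +
      (-1 : ℝ) ^ (m + 3) * D (fun j : Fin (m + 1) => w' ((j : ℕ) + 1)) = 0 := by
  set A : ℕ → ℝ := fun p => D (Function.update (uaux m w' p) (Fin.last m) (w' p)) with hA
  set B : ℕ → ℝ := fun p => D (Function.update (uaux m w' p) (Fin.last m) (w' (p + 1))) with hB
  -- substitution of the last argument
  have hL1 : ∀ p ≤ m, D (uaux m w' p) = -(A p + B p) := by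
    intro p hp
    have hup : uaux m w' p = Function.update (uaux m w' p) (Fin.last m) (w' (m + 2)) := by
      have : uaux m w' p (Fin.last m) = w' (m + 2) := by
        simp only [uaux, Fin.val_last]
        rw [if_neg (by omega)]
      rw [← this, Function.update_eq_self]
    have hm2 : w' (m + 2) = -∑ k ∈ range (m + 2), w' k := by
      rw [Finset.sum_range_succ] at hw
      rw [add_comm] at hw
      exact eq_neg_of_add_eq_zero_left hw
    have hzero : ∀ k ∈ range (m + 2), k ∉ ({p, p + 1} : Finset ℕ) →
        D (Function.update (uaux m w' p) (Fin.last m) (w' k)) = 0 := by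
      intro k hk hknot
      simp only [mem_range] at hk
      simp only [mem_insert, mem_singleton, not_or] at hknot
      obtain ⟨h1, h2⟩ := hknot
      rcases lt_or_ge k p with hkp | hkp
      · refine D.map_eq_zero_of_eq _ (i := ⟨k, by omega⟩) (j := Fin.last m) ?_
          (Fin.ne_of_val_ne (show k ≠ m by omega))
        rw [Function.update_of_ne (Fin.ne_of_val_ne (show k ≠ m by omega)),
          Function.update_self]
        simp only [uaux]
        rw [if_pos (show k < p from hkp)]
      · have hk2 : p + 2 ≤ k := by omega
        refine D.map_eq_zero_of_eq _ (i := ⟨k - 2, by omega⟩) (j := Fin.last m) ?_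
          (Fin.ne_of_val_ne (show k - 2 ≠ m by omega))
        rw [Function.update_of_ne (Fin.ne_of_val_ne (show k - 2 ≠ m by omega)),
          Function.update_self]
        simp only [uaux]
        rw [if_neg (show ¬ (k - 2 < p) by omega)]
        congr 1
        show k - 2 + 2 = k
        omega
    calc D (uaux m w' p)
        = D (Function.update (uaux m w' p) (Fin.last m) (w' (m + 2))) := by rw [← hup]
      _ = -D (Function.update (uaux m w' p) (Fin.last m) (∑ k ∈ range (m + 2), w' k)) := by
          rw [hm2, AlternatingMap.map_update_neg]
      _ = -∑ k ∈ range (m + 2), D (Function.update (uaux m w' p) (Fin.last m) (w' k)) := by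
          rw [AlternatingMap.map_update_sum]
      _ = -(A p + B p) := by
          congr 1
          rw [← Finset.sum_subset (s₁ := ({p, p + 1} : Finset ℕ))
            (by intro x hx; simp at hx; simp; omega) (fun x hx hnx => hzero x hx hnx)]
          rw [Finset.sum_insert (by simp), Finset.sum_singleton]
  -- the swap relation
  have hswap : ∀ p < m, A p = -(B (p + 1)) := by
    intro p hpm
    have hfun : Function.update (uaux m w' p) (Fin.last m) (w' p) =
        (Function.update (uaux m w' (p + 1)) (Fin.last m) (w' (p + 2))) ∘
          Equiv.swap (⟨p, by omega⟩ : Fin (m + 1)) (Fin.last m) := by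
      funext j
      rcases eq_or_ne j ⟨p, by omega⟩ with hj | hj
      · subst hj
        simp only [Function.comp_apply]
        rw [Equiv.swap_apply_left]
        rw [Function.update_self,
          Function.update_of_ne (Fin.ne_of_val_ne (show p ≠ m by omega))]
        simp only [uaux]
        rw [if_neg (by omega)]
      · rcases eq_or_ne j (Fin.last m) with hj2 | hj2
        · subst hj2
          simp only [Function.comp_apply]
          rw [Equiv.swap_apply_right]
          rw [Function.update_self,
            Function.update_of_ne (Ne.symm hj)]
          simp only [uaux]
          rw [if_pos (show p < p + 1 by omega)]
        · simp only [Function.comp_apply]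
          rw [Equiv.swap_apply_of_ne_of_ne hj hj2]
          rw [Function.update_of_ne hj2, Function.update_of_ne hj2]
          simp only [uaux]
          have hjp : (j : ℕ) ≠ p := fun h => hj (Fin.ext h)
          rcases lt_or_ge (j : ℕ) p with h | h
          · rw [if_pos h, if_pos (by omega)]
          · rw [if_neg (by omega), if_neg (by omega)]
    rw [hA, hB]
    simp only
    rw [hfun, AlternatingMap.map_swap _ _ (Fin.ne_of_val_ne (show p ≠ m by omega))]
  -- telescoping
  have htel : ∑ p ∈ range (m + 1), (A p + B p) = A m + B 0 := by
    rw [Finset.sum_add_distrib, Finset.sum_range_succ, Finset.sum_range_succ']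
    have : ∀ p ∈ range m, B (p + 1) = -(A p) := fun p hp => by
      rw [hswap p (mem_range.mp hp)]; ring
    rw [Finset.sum_congr rfl this, Finset.sum_neg_distrib]
    ring
  -- the last plain term
  have hlast : D (uaux m w' (m + 1)) = A m := by
    rw [hA]; simp only
    congr 1
    funext j
    rcases eq_or_ne j (Fin.last m) with hj | hj
    · subst hj
      rw [Function.update_self]
      simp only [uaux, Fin.val_last]
      rw [if_pos (by omega)]
    · rw [Function.update_of_ne hj]
      have hjm : (j : ℕ) < m := by
        have := j.isLt
        exact lt_of_le_of_ne (by omega) (fun h => hj (Fin.ext (by simpa using h)))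
      simp only [uaux]
      rw [if_pos (by omega), if_pos (by omega)]
  -- the rotation for B 0
  have hB0 : B 0 = (-1 : ℝ) ^ m * D (fun j : Fin (m + 1) => w' ((j : ℕ) + 1)) := by
    have hfun : Function.update (uaux m w' 0) (Fin.last m) (w' 1) =
        (fun j : Fin (m + 1) => w' ((j : ℕ) + 1)) ∘ (finRotate (m + 1)) := by
      funext j
      simp only [Function.comp_apply, finRotate_succ_apply]
      rcases eq_or_ne j (Fin.last m) with hj | hj
      · subst hj
        rw [Function.update_self]
        have : ((Fin.last m + 1 : Fin (m + 1)) : ℕ) = 0 := by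
          rw [Fin.val_add_one]
          simp
        rw [this]
      · rw [Function.update_of_ne hj]
        have : ((j + 1 : Fin (m + 1)) : ℕ) = (j : ℕ) + 1 := by
          rw [Fin.val_add_one, if_neg hj]
        rw [this]
        simp only [uaux]
        rw [if_neg (by omega)]
    rw [hB]
    simp only [zero_add]
    rw [hfun, AlternatingMap.map_perm, sign_finRotate]
    rcases Nat.even_or_odd m with he | ho
    · rw [he.neg_one_pow, Even.neg_one_pow (by simpa using he)]
      simp
    · rw [ho.neg_one_pow, Odd.neg_one_pow (by simpa using ho)]
      simp
  -- assembly
  rw [Finset.sum_range_succ, hlast]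
  have hsum : ∑ p ∈ range (m + 1), -D (uaux m w' p) = A m + B 0 := by
    rw [← htel]
    refine Finset.sum_congr rfl fun p hp => ?_
    rw [hL1 p (Nat.lt_succ_iff.mp (mem_range.mp hp))]
    ring
  rw [hsum, hB0]
  have : (-1 : ℝ) ^ (m + 3) = -(-1 : ℝ) ^ m := by rw [pow_add]; ring
  rw [this]
  ring

theorem facet_sum_zero (n : ℕ) (hn : 2 ≤ n)
    (w : Fin (n + 1) → EuclideanSpace ℝ (Fin n)) (hw : (∑ i, w i) = 0) :
    (∑ p, facet w p) = 0 := by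
  obtain ⟨m, rfl⟩ : ∃ m, n = m + 2 := ⟨n - 2, by omega⟩
  refine PiLp.ext fun i => ?_
  have hsa : ∀ (f : Fin (m + 3) → EuclideanSpace ℝ (Fin (m + 2))),
      (∑ p, f p) i = ∑ p, f p i := fun f => by
        rw [WithLp.ofLp_sum]; exact Finset.sum_apply i Finset.univ (fun p => (f p).ofLp)
  rw [hsa, show (0 : EuclideanSpace ℝ (Fin (m + 2))) i = 0 from rfl]
  set x : Fin (m + 2) → ℝ := WithLp.equiv 2 _ (EuclideanSpace.single i (1 : ℝ)) with hx
  set D : (Fin (m + 2) → ℝ) [⋀^Fin (m + 1)]→ₗ[ℝ] ℝ :=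
    (Matrix.detRowAlternating (R := ℝ) (n := Fin (m + 2))).curryLeft x with hD
  set w' : ℕ → (Fin (m + 2) → ℝ) :=
    fun k => if h : k < m + 3 then WithLp.equiv 2 _ (w ⟨k, h⟩) else 0 with hw'
  have he : ∀ (k : ℕ) (h : k < m + 3), w' k = WithLp.equiv 2 _ (w ⟨k, h⟩) := by
    intro k h; rw [hw']; simp only; rw [dif_pos h]
  have hdet : ∀ v : Fin (m + 1) → EuclideanSpace ℝ (Fin (m + 2)),
      (colMat (EuclideanSpace.single i 1) v).det
        = D (fun j => WithLp.equiv 2 _ (v j)) := by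
    intro v
    have htr : (colMat (EuclideanSpace.single i 1) v).transpose
        = Matrix.of (Matrix.vecCons x (fun j r => v j r)) := by
      ext r c
      rw [Matrix.transpose_apply, colMat]
      simp only [Matrix.of_apply]
      refine Fin.cases ?_ (fun j => ?_) r
      · rw [dif_pos (show ((0 : Fin (m + 2)) : ℕ) = 0 from rfl), Matrix.cons_val_zero]
        rfl
      · rw [dif_neg (show ((Fin.succ j : Fin (m + 2)) : ℕ) ≠ 0 by simp)]
        rw [Matrix.cons_val_succ]
        rfl
    rw [← Matrix.det_transpose, htr]
    rfl
  have hwsum : ∑ k ∈ Finset.range (m + 3), w' k = 0 := by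
    rw [← Fin.sum_univ_eq_sum_range (fun k => w' k) (m + 3)]
    have h4 := congrArg (WithLp.linearEquiv 2 ℝ (Fin (m + 2) → ℝ)) hw
    rw [map_sum, map_zero] at h4
    simp only [WithLp.linearEquiv_apply] at h4
    have h5 : ∀ k : Fin (m + 3), w' (k : ℕ)
        = (WithLp.equiv 2 (Fin (m + 2) → ℝ)) (w k) := by
      intro k
      rw [he (k : ℕ) k.isLt, Fin.eta]
    rw [Finset.sum_congr rfl (fun k _ => h5 k)]
    exact h4
  have hterm : ∀ p : Fin (m + 3), facet w p i =
      if (p : ℕ) < m + 2 then -(D (uaux m w' (p : ℕ)))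
      else (-1 : ℝ) ^ (m + 3) * D (fun j : Fin (m + 1) => w' ((j : ℕ) + 1)) := by
    intro p
    by_cases hp : (p : ℕ) < m + 2
    · rw [facet, dif_pos hp, if_pos hp, PiLp.neg_apply]
      congr 1
      rw [vprod, WithLp.equiv_symm_apply, PiLp.toLp_apply, hdet]
      congr 1
      funext j
      rcases lt_or_ge (j : ℕ) (p : ℕ) with h | h
      · rw [if_pos h]
        simp only [uaux]
        rw [if_pos h, he (j : ℕ) (by omega)]
      · rw [if_neg (by omega)]
        simp only [uaux]
        rw [if_neg (by omega), he ((j : ℕ) + 2) (by omega)]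
    · rw [facet, dif_neg hp, if_neg hp, PiLp.smul_apply, smul_eq_mul]
      congr 1
      rw [vprod, WithLp.equiv_symm_apply, PiLp.toLp_apply, hdet]
      congr 1
      funext j
      rw [he ((j : ℕ) + 1) (by omega)]
  rw [Finset.sum_congr rfl (fun p _ => hterm p)]
  rw [Fin.sum_univ_eq_sum_range (fun q => if q < m + 2 then -(D (uaux m w' q))
      else (-1 : ℝ) ^ (m + 3) * D (fun j : Fin (m + 1) => w' ((j : ℕ) + 1))) (m + 3)]
  rw [Finset.sum_range_succ, if_neg (by omega)]
  rw [Finset.sum_congr rfl (fun q hq => if_pos (Finset.mem_range.mp hq))]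
  exact key D w' hwsum
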